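/- Let n ≥ 1 and let A be an n×n complex matrix. Suppose there exist a column vector w ∈ ℂⁿ and a row vector u ∈ ℂⁿ such that A·w = 0, u·A = 0, and all coordinates of w and of u are nonzero. For indices i, j, let A(i,j) denote the (n−1)×(n−1) minor of A obtained by deleting row i and column j. Then the quantity (−1)^{i+j} · det(A(i,j)) / (u_i · w_j) is independent of i and j; that is, for all indices i, j, i′, j′: (−1)^{i+j} · det(A(i,j)) / (u_i · w_j) = (−1)^{i′+j′} · det(A(i′,j′)) / (u_{i′} · w_{j′}). -/

import Mathlib

open Matrix

/-- If `B` kills `w` (with `w p0 ≠ 0`) and some `n × n` minor avoiding row `q0` and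
column `p0` is invertible, then any vector killed by `B` is proportional to `w`. -/
lemma aux_ker_prop (n : ℕ) (B : Matrix (Fin (n + 1)) (Fin (n + 1)) ℂ)
    (w : Fin (n + 1) → ℂ) (hw : B.mulVec w = 0) (p0 q0 : Fin (n + 1)) (hwp : w p0 ≠ 0)
    (hM : (B.submatrix q0.succAbove p0.succAbove).det ≠ 0)
    (v : Fin (n + 1) → ℂ) (hv : B.mulVec v = 0) :
    ∀ p, v p * w p0 = v p0 * w p := by
  set a : ℂ := v p0 / w p0 with ha
  set v' : Fin (n + 1) → ℂ := fun p => v p - a * w p with hv'def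
  have hv'p0 : v' p0 = 0 := by
    simp only [hv'def, ha]
    field_simp
    ring
  have hBv' : B.mulVec v' = 0 := by
    have : v' = v - a • w := rfl
    rw [this, mulVec_sub, mulVec_smul, hv, hw]
    simp
  have hsub : (B.submatrix q0.succAbove p0.succAbove).mulVec
      (fun r => v' (p0.succAbove r)) = 0 := by
    funext r
    have h1 := congrFun hBv' (q0.succAbove r)
    rw [mulVec, dotProduct, Fin.sum_univ_succAbove
      (fun l => B (q0.succAbove r) l * v' l) p0, hv'p0, mul_zero, zero_add] at h1
    simpa [mulVec, dotProduct, submatrix] using h1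
  have hzero : (fun r => v' (p0.succAbove r)) = 0 := by
    by_contra hne
    exact hM (Matrix.exists_mulVec_eq_zero_iff.mp ⟨_, hne, hsub⟩)
  have hv'0 : ∀ p, v' p = 0 := by
    intro p
    rcases eq_or_ne p p0 with rfl | hp
    · exact hv'p0
    · obtain ⟨r, hr⟩ := Fin.exists_succAbove_eq hp
      · rw [← hr]
        exact congrFun hzero r
  intro p
  have h := sub_eq_zero.mp (hv'0 p)
  rw [h, ha]
  field_simp

theorem minor_ratio_independent (n : ℕ) (A : Matrix (Fin (n + 1)) (Fin (n + 1)) ℂ)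
    (w u : Fin (n + 1) → ℂ)
    (hw : A.mulVec w = 0) (hu : Matrix.vecMul u A = 0)
    (hw0 : ∀ j, w j ≠ 0) (hu0 : ∀ i, u i ≠ 0) :
    ∀ i j i' j' : Fin (n + 1),
      (-1 : ℂ) ^ ((i : ℕ) + (j : ℕ)) *
          (A.submatrix i.succAbove j.succAbove).det / (u i * w j) =
      (-1 : ℂ) ^ ((i' : ℕ) + (j' : ℕ)) *
          (A.submatrix i'.succAbove j'.succAbove).det / (u i' * w j') := by
  have hwne : w ≠ 0 := fun h => hw0 0 (by rw [h]; rfl)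
  have hdetA : A.det = 0 := Matrix.exists_mulVec_eq_zero_iff.mp ⟨w, hwne, hw⟩
  have hadj : ∀ i j : Fin (n + 1),
      adjugate A j i = (-1 : ℂ) ^ ((i : ℕ) + (j : ℕ)) *
        (A.submatrix i.succAbove j.succAbove).det :=
    fun i j => Matrix.adjugate_fin_succ_eq_det_submatrix A j i
  by_cases h0 : adjugate A = 0
  · intro i j i' j'
    have hz : ∀ i j : Fin (n + 1), (A.submatrix i.succAbove j.succAbove).det = 0 := by
      intro i j
      have h := hadj i j
      rw [h0] at h
      simp only [Matrix.zero_apply] at h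
      have hne : ((-1 : ℂ)) ^ ((i : ℕ) + (j : ℕ)) ≠ 0 := by
        simp [pow_ne_zero]
      exact (mul_eq_zero.mp h.symm).resolve_left hne
    rw [hz, hz]
    simp
  · obtain ⟨p0, hp0⟩ : ∃ p, adjugate A p ≠ 0 := by
      by_contra hc
      push_neg at hc
      exact h0 (by ext p q; rw [hc p]; rfl)
    obtain ⟨q0, hq0⟩ : ∃ q, adjugate A p0 q ≠ 0 := by
      by_contra hc
      push_neg at hc
      exact hp0 (funext hc)
    -- the minor through (q0, p0) is invertible
    have hMdet : (A.submatrix q0.succAbove p0.succAbove).det ≠ 0 := by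
      intro h
      apply hq0
      rw [hadj q0 p0, h, mul_zero]
    have hMdetT : ((Aᵀ).submatrix p0.succAbove q0.succAbove).det ≠ 0 := by
      have : (Aᵀ).submatrix p0.succAbove q0.succAbove
          = (A.submatrix q0.succAbove p0.succAbove)ᵀ := rfl
      rw [this, Matrix.det_transpose]
      exact hMdet
    have huT : Aᵀ.mulVec u = 0 := by rw [Matrix.mulVec_transpose, hu]
    -- columns of adjugate are proportional to w
    have hcol : ∀ q p : Fin (n + 1),
        adjugate A p q * w p0 = adjugate A p0 q * w p := by
      intro q
      refine aux_ker_prop n A w hw p0 q0 (hw0 p0) hMdet (fun p => adjugate A p q) ?_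
      have hAadj : A * adjugate A = 0 := by
        rw [Matrix.mul_adjugate, hdetA, zero_smul]
      funext k
      have := congrFun (congrFun hAadj k) q
      simpa [mulVec, dotProduct, Matrix.mul_apply] using this
    -- rows of adjugate are proportional to u
    have hrow : ∀ p q : Fin (n + 1),
        adjugate A p q * u q0 = adjugate A p q0 * u q := by
      intro p
      refine aux_ker_prop n Aᵀ u huT q0 p0 (hu0 q0) hMdetT (fun q => adjugate A p q) ?_
      have hadjA : adjugate A * A = 0 := by
        rw [Matrix.adjugate_mul, hdetA, zero_smul]
      funext k
      have := congrFun (congrFun hadjA p) k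
      simpa [mulVec, dotProduct, Matrix.mul_apply, Matrix.transpose_apply,
        mul_comm] using this
    have key : ∀ p q : Fin (n + 1),
        adjugate A p q * (w p0 * u q0) = adjugate A p0 q0 * (w p * u q) := by
      intro p q
      have h1 := hcol q p
      have h2 := hrow p0 q
      calc adjugate A p q * (w p0 * u q0)
          = (adjugate A p q * w p0) * u q0 := by ring
        _ = (adjugate A p0 q * w p) * u q0 := by rw [h1]
        _ = (adjugate A p0 q * u q0) * w p := by ring
        _ = (adjugate A p0 q0 * u q) * w p := by rw [h2]
        _ = adjugate A p0 q0 * (w p * u q) := by ring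
    intro i j i' j'
    have hne1 : u i * w j ≠ 0 := mul_ne_zero (hu0 i) (hw0 j)
    have hne2 : u i' * w j' ≠ 0 := mul_ne_zero (hu0 i') (hw0 j')
    rw [div_eq_div_iff hne1 hne2, ← hadj i j, ← hadj i' j']
    have hne3 : w p0 * u q0 ≠ 0 := mul_ne_zero (hw0 p0) (hu0 q0)
    apply mul_left_cancel₀ hne3
    linear_combination (u i' * w j') * key j i - (u i * w j) * key j' i'
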